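/- The map from RBM parameters λ = (a, w, b) ∈ ℝ^d × ℝ^d × ℝ to conditional independence model parameters (ψ, η, π) ∈ (0,1)^d × (0,1)^d × (0,1), given by ψ_i = σ(a_i + w_i), η_i = 1 - σ(a_i), π = (Σ_x e^{aᵀx+b+xᵀw})/(Σ_x (e^{aᵀx} + e^{aᵀx+b+xᵀw})), is surjective onto (0,1)^d × (0,1)^d × (0,1). -/

import Mathlib

open Finset Real

/-- The sigmoid function σ(z) = 1/(1+e^{-z}). -/
noncomputable def sig (z : ℝ) : ℝ := 1 / (1 + Real.exp (-z))

/-- Real value of a binary unit. -/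
def bv (b : Bool) : ℝ := if b then 1 else 0

/-- The map λ = (a, w, b) ↦ θ = (ψ, η, π) from RBM parameters (one hidden unit) to
conditional-independence-model parameters. -/
noncomputable def thetaMap (d : ℕ) :
    ((Fin d → ℝ) × (Fin d → ℝ) × ℝ) → ((Fin d → ℝ) × (Fin d → ℝ) × ℝ) :=
  fun lam =>
    let a := lam.1; let w := lam.2.1; let b := lam.2.2
    ((fun i => sig (a i + w i)),
     (fun i => 1 - sig (a i)),
     (∑ x : Fin d → Bool,
        Real.exp ((∑ i, a i * bv (x i)) + b + ∑ i, w i * bv (x i))) /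
       (∑ x : Fin d → Bool,
        (Real.exp (∑ i, a i * bv (x i)) +
          Real.exp ((∑ i, a i * bv (x i)) + b + ∑ i, w i * bv (x i)))))

lemma sig_logit {p : ℝ} (h0 : 0 < p) (h1 : p < 1) :
    sig (Real.log (p / (1 - p))) = p := by
  have h1' : (0:ℝ) < 1 - p := by linarith
  have hp : (0:ℝ) < p / (1 - p) := div_pos h0 h1'
  unfold sig
  rw [← Real.log_inv, Real.exp_log (by positivity)]
  rw [inv_div]
  field_simp
  ring

/-- the map λ ↦ θ is surjective onto (0,1)^d × (0,1)^d × (0,1). -/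
theorem thetaMap_surjective (d : ℕ) (ψ η : Fin d → ℝ) (piY : ℝ)
    (hψ : ∀ i, ψ i ∈ Set.Ioo (0 : ℝ) 1) (hη : ∀ i, η i ∈ Set.Ioo (0 : ℝ) 1)
    (hpi : piY ∈ Set.Ioo (0 : ℝ) 1) :
    ∃ (a w : Fin d → ℝ) (b : ℝ), thetaMap d (a, w, b) = (ψ, η, piY) := by
  obtain ⟨hp0, hp1⟩ := hpi
  set a : Fin d → ℝ := fun i => Real.log ((1 - η i) / (1 - (1 - η i))) with ha
  set w : Fin d → ℝ := fun i => Real.log (ψ i / (1 - ψ i)) - a i with hw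
  set S0 : ℝ := ∑ x : Fin d → Bool, Real.exp (∑ i, a i * bv (x i)) with hS0
  set T : ℝ := ∑ x : Fin d → Bool,
      Real.exp ((∑ i, a i * bv (x i)) + ∑ i, w i * bv (x i)) with hT
  have hS0pos : 0 < S0 := Finset.sum_pos (fun x _ => Real.exp_pos _) ⟨fun _ => true, Finset.mem_univ _⟩
  have hTpos : 0 < T := Finset.sum_pos (fun x _ => Real.exp_pos _) ⟨fun _ => true, Finset.mem_univ _⟩
  set b : ℝ := Real.log (piY * S0 / ((1 - piY) * T)) with hb
  have hpi1 : (0:ℝ) < 1 - piY := by linarith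
  have heb : Real.exp b = piY * S0 / ((1 - piY) * T) := by
    rw [hb, Real.exp_log (by positivity)]
  refine ⟨a, w, b, ?_⟩
  unfold thetaMap
  simp only
  simp only [Prod.mk.injEq]
  refine ⟨?_, ?_, ?_⟩
  · funext i
    have h := hψ i
    have : a i + w i = Real.log (ψ i / (1 - ψ i)) := by rw [hw]; ring
    rw [this, sig_logit h.1 h.2]
  · funext i
    have h := hη i
    have : sig (a i) = 1 - η i := by
      rw [ha]; exact sig_logit (by simp; linarith [h.2]) (by simp; linarith [h.1])
    simp [this]
  · have hnum : (∑ x : Fin d → Bool,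
        Real.exp ((∑ i, a i * bv (x i)) + b + ∑ i, w i * bv (x i)))
        = Real.exp b * T := by
      rw [hT, Finset.mul_sum]
      refine Finset.sum_congr rfl fun x _ => ?_
      rw [← Real.exp_add]; ring_nf
    have hden : (∑ x : Fin d → Bool,
        (Real.exp (∑ i, a i * bv (x i)) +
          Real.exp ((∑ i, a i * bv (x i)) + b + ∑ i, w i * bv (x i))))
        = S0 + Real.exp b * T := by
      rw [Finset.sum_add_distrib, ← hS0, hnum]
    rw [hnum, hden, heb]
    field_simp
    ring
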